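/- For every natural number n ≥ 1, ∫_0^1 [1/2 − (1/(1+z))·(4z/(1+z)²)^n] / (1 − z) dz = (1/4)·(H_n − ln 4), where H_n = ∑_{k=1}^n 1/k. -/

import Mathlib

open MeasureTheory intervalIntegral Real

/-- The `n`-th harmonic number `∑_{k=1}^n 1/k`. -/
noncomputable def H (n : ℕ) : ℝ := ∑ k ∈ Finset.range n, (1 : ℝ) / (k + 1)

lemma hne01 : ∀ z ∈ Set.uIcc (0:ℝ) 1, (1:ℝ) + z ≠ 0 := by
  intro z hz
  rw [Set.uIcc_of_le (by norm_num)] at hz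
  nlinarith [hz.1]

lemma key_alg (n : ℕ) (z : ℝ) (h1 : 1 + z ≠ 0) (h2 : 1 - z ≠ 0) :
    (1/2 - (1/(1 + z)) * (4*z/(1 + z)^2) ^ n) / (1 - z)
      = -(1/(2*(1+z))) + ∑ k ∈ Finset.range n, (4*z/(1 + z)^2)^k * (1-z)/(1+z)^3 := by
  induction n with
  | zero =>
    simp only [pow_zero, Finset.range_zero, Finset.sum_empty, add_zero, mul_one]
    field_simp
    ring
  | succ n ih =>
    rw [Finset.sum_range_succ, ← add_assoc, ← ih, pow_succ]
    field_simp
    ring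

lemma contOn (k : ℕ) :
    ContinuousOn (fun z : ℝ => (4*z/(1 + z)^2)^k * (1-z)/(1+z)^3) (Set.uIcc 0 1) := by
  apply ContinuousOn.div
  · exact (((continuousOn_const.mul continuousOn_id).div (by fun_prop)
      (fun z hz => pow_ne_zero 2 (hne01 z hz))).pow k).mul (by fun_prop)
  · fun_prop
  · exact fun z hz => pow_ne_zero 3 (hne01 z hz)

lemma sub_integral (k : ℕ) :
    ∫ z in (0:ℝ)..1, (4*z/(1 + z)^2)^k * (1-z)/(1+z)^3 = 1/(4*((k:ℝ)+1)) := by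
  have h : ∀ z ∈ Set.uIcc (0:ℝ) 1,
      HasDerivAt (fun z : ℝ => 4*z/(1+z)^2) (4*(1-z)/(1+z)^3) z := by
    intro z hz
    have hz' := hne01 z hz
    have h1 : HasDerivAt (fun z : ℝ => 4*z) 4 z := by
      simpa using (hasDerivAt_id z).const_mul (4:ℝ)
    have h2 : HasDerivAt (fun z : ℝ => (1+z)^2) (2*(1+z)) z := by
      have := (HasDerivAt.pow ((hasDerivAt_id z).const_add (1:ℝ)) 2)
      simpa [Pi.pow_def] using this
    have := h1.fun_div h2 (pow_ne_zero 2 hz')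
    refine this.congr_deriv ?_
    field_simp
    ring
  have hcont : ContinuousOn (fun z : ℝ => 4*(1-z)/(1+z)^3) (Set.uIcc 0 1) := by
    apply ContinuousOn.div (by fun_prop) (by fun_prop)
    intro z hz
    exact pow_ne_zero 3 (hne01 z hz)
  have hg : Continuous (fun t : ℝ => t^k / 4) := by fun_prop
  have hsub := intervalIntegral.integral_comp_smul_deriv h hcont hg
  have hL : (∫ z in (0:ℝ)..1, (4*z/(1 + z)^2)^k * (1-z)/(1+z)^3)
      = ∫ x in (0:ℝ)..1,
          (4*(1-x)/(1+x)^3) • ((fun t : ℝ => t^k/4) ∘ (fun z : ℝ => 4*z/(1+z)^2)) x := by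
    apply intervalIntegral.integral_congr
    intro z hz
    simp only [Function.comp, smul_eq_mul]
    ring
  rw [hL, hsub,
    show (4*(0:ℝ)/(1+0)^2) = 0 by norm_num,
    show (4*(1:ℝ)/(1+1)^2) = 1 by norm_num,
    intervalIntegral.integral_div, integral_pow]
  field_simp
  ring

theorem stmt16 (n : ℕ) (hn : 1 ≤ n) :
    ∫ z in (0:ℝ)..1, (1/2 - (1/(1 + z)) * (4*z/(1 + z)^2) ^ n) / (1 - z)
      = (1/4) * (H n - Real.log 4) := by
  have hcongr : (∫ z in (0:ℝ)..1, (1/2 - (1/(1 + z)) * (4*z/(1 + z)^2) ^ n) / (1 - z))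
      = ∫ z in (0:ℝ)..1,
          (-(1/(2*(1+z))) + ∑ k ∈ Finset.range n, (4*z/(1 + z)^2)^k * (1-z)/(1+z)^3) := by
    apply intervalIntegral.integral_congr_ae
    have h1 : ∀ᵐ x : ℝ, x ≠ 1 := by
      rw [MeasureTheory.ae_iff]
      convert Real.volume_singleton (a := (1:ℝ)) using 2
      ext x; simp
    filter_upwards [h1] with x hx hmem
    rw [Set.uIoc_of_le (by norm_num)] at hmem
    exact key_alg n x (by nlinarith [hmem.1]) (sub_ne_zero.mpr (Ne.symm hx))
  have hInt1 : IntervalIntegrable (fun z : ℝ => -(1/(2*(1+z)))) volume 0 1 := by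
    apply ContinuousOn.intervalIntegrable
    apply ContinuousOn.neg
    apply ContinuousOn.div continuousOn_const (by fun_prop)
    intro z hz hc
    exact hne01 z hz (by linarith)
  have hInt2 : IntervalIntegrable
      (fun z : ℝ => ∑ k ∈ Finset.range n, (4*z/(1 + z)^2)^k * (1-z)/(1+z)^3) volume 0 1 := by
    apply ContinuousOn.intervalIntegrable
    exact continuousOn_finset_sum _ fun k _ => contOn k
  rw [hcongr, intervalIntegral.integral_add hInt1 hInt2]
  have hSum : (∫ z in (0:ℝ)..1, ∑ k ∈ Finset.range n, (4*z/(1 + z)^2)^k * (1-z)/(1+z)^3)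
      = ∑ k ∈ Finset.range n, 1/(4*((k:ℝ)+1)) := by
    rw [intervalIntegral.integral_finset_sum
      (fun k _ => (contOn k).intervalIntegrable)]
    exact Finset.sum_congr rfl fun k _ => sub_integral k
  have hLog : (∫ z in (0:ℝ)..1, -(1/(2*(1+z)))) = -(1/2) * Real.log 2 := by
    have e : ∀ z : ℝ, -(1/(2*(1+z))) = (-(1/2)) * (1/(1+z)) := by
      intro z
      rcases eq_or_ne (1+z) 0 with h|h
      · rw [h]; simp
      · field_simp
    simp_rw [e]
    rw [intervalIntegral.integral_const_mul]
    have hshift : (∫ z in (0:ℝ)..1, 1/(1+z)) = Real.log 2 := by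
      have := intervalIntegral.integral_comp_add_left (a := (0:ℝ)) (b := 1)
        (fun u : ℝ => 1/u) 1
      have h2 : (1:ℝ) + 1 = 2 := by norm_num
      simpa [h2] using this
    rw [hshift]
  rw [hSum, hLog]
  have h4 : Real.log 4 = 2 * Real.log 2 := by
    rw [show (4:ℝ) = 2^2 by norm_num, Real.log_pow]
    push_cast; ring
  have hH : ∑ k ∈ Finset.range n, 1/(4*((k:ℝ)+1)) = (1/4) * H n := by
    rw [H, Finset.mul_sum]
    exact Finset.sum_congr rfl fun k _ => by field_simp
  rw [hH, h4]
  ring
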